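/- Let k ≥ 2 be an integer and let b_1, …, b_k be elements of a commutative ring. Then the determinant of the loop matrix A_loop equals b_1·b_2⋯b_k + (−1)^{k−1}. -/
import Mathlib


/-- The loop matrix of exponents `b : Fin k → R`: entries `b i` on the diagonal,
`1` in positions `(i, i+1)` for `i = 0, …, k-2` and in position `(k-1, 0)`,
and `0` elsewhere. (This is the exponent matrix of the atomic loop potential.) -/
def loopMatrix {R : Type*} [CommRing R] {k : ℕ} (b : Fin k → R) :
    Matrix (Fin k) (Fin k) R :=
  Matrix.of fun i j =>
    if i = j then b i
    else if j.val = i.val + 1 ∨ (i.val = k - 1 ∧ j.val = 0) then 1 else 0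

/-- The determinant of the loop matrix is `b 1 ⋯ b k + (-1)^(k-1)`. -/
theorem det_loopMatrix {R : Type*} [CommRing R] {k : ℕ} (hk : 2 ≤ k)
    (b : Fin k → R) :
    (loopMatrix b).det = (∏ i, b i) + (-1 : R) ^ (k - 1) := by
  obtain ⟨n, rfl⟩ : ∃ n, k = n + 2 := ⟨k - 2, by omega⟩
  set A := loopMatrix b with hA
  have entry : ∀ i j : Fin (n + 2), A i j =
      if i = j then b i
      else if j.val = i.val + 1 ∨ (i.val = n + 1 ∧ j.val = 0) then 1 else 0 := by
    intro i j
    simp [hA, loopMatrix]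
  rw [Matrix.det_succ_column_zero]
  have key : ∀ i : Fin (n + 2), i ∉ ({0, Fin.last (n+1)} : Finset (Fin (n+2))) →
      (-1:R) ^ (i : ℕ) * A i 0 * Matrix.det (A.submatrix i.succAbove Fin.succ) = 0 := by
    intro i hi
    simp only [Finset.mem_insert, Finset.mem_singleton] at hi
    push_neg at hi
    have h1 : i.val ≠ 0 := fun h => hi.1 (Fin.ext h)
    have h2 : i.val ≠ n + 1 := fun h => hi.2 (Fin.ext h)
    have : A i 0 = 0 := by
      rw [entry]
      have : ¬ (i = 0) := hi.1
      rw [if_neg this, if_neg]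
      simp only [Fin.val_zero]
      omega
    rw [this]; ring
  rw [← Finset.sum_subset (Finset.subset_univ ({0, Fin.last (n+1)} : Finset (Fin (n+2))))
    (fun i _ hi => key i hi)]
  have hne : (0 : Fin (n+2)) ≠ Fin.last (n+1) := by
    simp [Fin.ext_iff]
  rw [Finset.sum_pair hne]
  -- first minor: upper triangular with diagonal b (i.succ)
  have hm1 : Matrix.det (A.submatrix (Fin.succAbove 0) Fin.succ) = ∏ i : Fin (n+1), b i.succ := by
    rw [Matrix.det_of_upperTriangular]
    · apply Finset.prod_congr rfl
      intro i _
      simp only [Matrix.submatrix_apply, Fin.succAbove_zero]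
      rw [entry, if_pos rfl]
    · intro i j hij
      simp only [Matrix.submatrix_apply, Fin.succAbove_zero]
      rw [entry, if_neg, if_neg]
      · simp only [Fin.val_succ]
        have hj : (j:ℕ) < i := hij
        have hi : (i:ℕ) < n + 1 := i.isLt
        omega
      · intro h
        have := Fin.val_eq_val (i.succ) (j.succ) |>.mpr (by rw [h])
        simp only [Fin.val_succ] at this
        have hj : (j:ℕ) < i := hij
        omega
  -- second minor: lower triangular with 1s on the diagonal
  have hm2 : Matrix.det (A.submatrix (Fin.succAbove (Fin.last (n+1))) Fin.succ) = 1 := by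
    rw [Matrix.det_of_lowerTriangular]
    · apply Finset.prod_eq_one
      intro i _
      simp only [Matrix.submatrix_apply, Fin.succAbove_last]
      rw [entry, if_neg, if_pos]
      · left; simp [Fin.val_succ]
      · intro h
        have := congrArg Fin.val h
        simp [Fin.val_succ] at this
    · intro i j hij
      simp only [Matrix.submatrix_apply, Fin.succAbove_last]
      rw [entry, if_neg, if_neg]
      · simp only [Fin.val_succ, Fin.coe_castSucc]
        have hj : (i:ℕ) < j := hij
        have hi : (i:ℕ) < n + 1 := i.isLt
        omega
      · intro h
        have := congrArg Fin.val h
        simp only [Fin.val_succ, Fin.coe_castSucc] at this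
        have hj : (i:ℕ) < j := hij
        omega
  have hA00 : A 0 0 = b 0 := by rw [entry, if_pos rfl]
  have hAl0 : A (Fin.last (n+1)) 0 = 1 := by
    rw [entry, if_neg, if_pos]
    · right; exact ⟨by simp, rfl⟩
    · intro h
      have := congrArg Fin.val h
      simp at this
  rw [hm1, hm2, hA00, hAl0]
  conv_rhs => rw [Fin.prod_univ_succ]
  simp only [Fin.val_zero, Fin.val_last, pow_zero, one_mul, mul_one]
  have : n + 2 - 1 = n + 1 := rfl
  rw [this]
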